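/- limsup_{n→∞} κ₂(n)/n^{log₂(1+√2)} = (2+√2)/4. -/

import Mathlib

open Matrix

/-- The matrix `A_i = [[i+1,1],[1,0]]`. -/
def A (i : ℕ) : Matrix (Fin 2) (Fin 2) ℤ := !![(i : ℤ) + 1, 1; 1, 0]

/-- `κ(n) = [1,0]·A_{i₀}·A_{i₁}···A_{i_s}·[1,0]^T` where `i_s⋯i₁i₀` is the base-`k`
expansion of `n` (`Nat.digits k n = [i₀, i₁, …, i_s]`), i.e. the `(0,0)` entry of the
product of the `A_i` taken with digits in order of increasing significance. -/
def kap (k n : ℕ) : ℤ :=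
  ((Nat.digits k n).foldr (fun i M => A i * M) (1 : Matrix (Fin 2) (Fin 2) ℤ)) 0 0


noncomputable section

private def ss : ℝ := Real.sqrt 2
private def al : ℝ := Real.logb 2 (1 + Real.sqrt 2)

private lemma ss_sq : ss^2 = 2 := Real.sq_sqrt (by norm_num)
private lemma ss_lb : 1.4142 ≤ ss := by
  unfold ss
  nlinarith [Real.sq_sqrt (show (0:ℝ) ≤ 2 by norm_num), Real.sqrt_nonneg 2,
    mul_self_nonneg (Real.sqrt 2 - 1.4142), mul_self_nonneg (Real.sqrt 2 + 1.4142)]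
private lemma ss_ub : ss ≤ 1.41422 := by
  unfold ss
  nlinarith [Real.sq_sqrt (show (0:ℝ) ≤ 2 by norm_num), Real.sqrt_nonneg 2,
    mul_self_nonneg (Real.sqrt 2 - 1.41422), mul_self_nonneg (Real.sqrt 2 + 1.41422)]

private lemma two_rpow_al : (2:ℝ) ^ al = 1 + ss := by
  unfold al ss
  exact Real.rpow_logb (by norm_num) (by norm_num) (by positivity)

private lemma al_ge : (5/4 : ℝ) ≤ al := by
  unfold al
  rw [Real.le_logb_iff_rpow_le (by norm_num) (by positivity)]
  have h1 : (2:ℝ) ^ (5/4 : ℝ) = ((2:ℝ)^(5:ℕ)) ^ ((1:ℝ)/4) := by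
    rw [← Real.rpow_natCast 2 5, ← Real.rpow_mul (by norm_num)]
    norm_num
  have h2 : (1 + Real.sqrt 2) = ((1+Real.sqrt 2)^(4:ℕ)) ^ ((1:ℝ)/4) := by
    rw [← Real.rpow_natCast (1 + Real.sqrt 2) 4, ← Real.rpow_mul (by positivity)]
    norm_num
  rw [h1, h2]
  apply Real.rpow_le_rpow (by positivity) _ (by norm_num)
  have h := ss_sq
  have h1 := ss_lb
  unfold ss at h h1
  nlinarith [h, h1]

private lemma al_ge1 : (1:ℝ) ≤ al := le_trans (by norm_num) al_ge
private lemma al_pos : (0:ℝ) < al := lt_of_lt_of_le (by norm_num) al_ge1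

private lemma le_rpow_al {x q : ℝ} (hx : 1 ≤ x) (hq : 0 ≤ q) (h : q^4 ≤ x^5) :
    q ≤ x ^ al := by
  have h54 : x ^ ((5:ℝ)/4) ≤ x ^ al := Real.rpow_le_rpow_of_exponent_le hx (by exact_mod_cast al_ge)
  refine le_trans ?_ h54
  have h1 : x ^ ((5:ℝ)/4) = (x^(5:ℕ)) ^ ((1:ℝ)/4) := by
    rw [← Real.rpow_natCast x 5, ← Real.rpow_mul (by linarith)]
    norm_num
  have h2 : q = (q^(4:ℕ)) ^ ((1:ℝ)/4) := by
    rw [← Real.rpow_natCast q 4, ← Real.rpow_mul hq]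
    norm_num
  rw [h1, h2]
  exact Real.rpow_le_rpow (by positivity) h (by norm_num)

/- ### the sequences a, b -/

private def P2 (n : ℕ) : Matrix (Fin 2) (Fin 2) ℤ :=
  (Nat.digits 2 n).foldr (fun i M => A i * M) 1
private def av (n : ℕ) : ℤ := P2 n 0 0
private def bv (n : ℕ) : ℤ := P2 n 1 0

private lemma kap_eq (n : ℕ) : kap 2 n = av n := rfl

private lemma P2_even (k : ℕ) (hk : k ≠ 0) : P2 (2*k) = A 0 * P2 k := by
  unfold P2
  rw [Nat.digits_def' (by norm_num : 1 < 2) (by omega : 0 < 2*k)]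
  simp [Nat.mul_div_cancel_left, Nat.mul_mod_right]

private lemma P2_odd (k : ℕ) : P2 (2*k+1) = A 1 * P2 k := by
  unfold P2
  rw [Nat.digits_def' (by norm_num : 1 < 2) (by omega : 0 < 2*k+1)]
  have h1 : (2*k+1) % 2 = 1 := by omega
  have h2 : (2*k+1) / 2 = k := by omega
  rw [h1, h2]
  rfl

private lemma av_even (k : ℕ) (hk : k ≠ 0) : av (2*k) = av k + bv k := by
  unfold av bv; rw [P2_even k hk]
  simp [A, Matrix.mul_apply, Fin.sum_univ_succ]

private lemma bv_even (k : ℕ) (hk : k ≠ 0) : bv (2*k) = av k := by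
  unfold av bv; rw [P2_even k hk]
  simp [A, Matrix.mul_apply, Fin.sum_univ_succ]

private lemma av_odd (k : ℕ) : av (2*k+1) = 2 * av k + bv k := by
  unfold av bv; rw [P2_odd k]
  simp [A, Matrix.mul_apply, Fin.sum_univ_succ]

private lemma bv_odd (k : ℕ) : bv (2*k+1) = av k := by
  unfold av bv; rw [P2_odd k]
  simp [A, Matrix.mul_apply, Fin.sum_univ_succ]

private lemma av_zero : av 0 = 1 := by simp [av, P2, Matrix.one_apply]
private lemma bv_zero : bv 0 = 0 := by simp [bv, P2, Matrix.one_apply]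

private lemma av_basic : ∀ n, 1 ≤ av n ∧ 0 ≤ bv n ∧ bv n ≤ av n := by
  intro n
  induction n using Nat.strong_induction_on with
  | _ n ih =>
    rcases Nat.eq_zero_or_pos n with h0 | h0
    · subst h0; exact ⟨by rw [av_zero], by rw [bv_zero], by rw [av_zero, bv_zero]; norm_num⟩
    rcases Nat.even_or_odd n with ⟨k, hk⟩ | ⟨k, hk⟩
    · have hk0 : k ≠ 0 := by omega
      have hkn : k < n := by omega
      obtain ⟨h1, h2, h3⟩ := ih k hkn
      subst hk
      rw [show k + k = 2*k by ring]
      rw [av_even k hk0, bv_even k hk0]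
      exact ⟨by omega, by omega, by omega⟩
    · have hkn : k < n := by omega
      obtain ⟨h1, h2, h3⟩ := ih k hkn
      subst hk
      rw [av_odd k, bv_odd k]
      exact ⟨by omega, by omega, by omega⟩

private lemma av1 : av 1 = 2 := by have := av_odd 0; rw [av_zero, bv_zero] at this; simpa using this
private lemma bv1 : bv 1 = 1 := by have := bv_odd 0; rw [av_zero] at this; simpa using this
private lemma av2 : av 2 = 3 := by
  have := av_even 1 one_ne_zero; rw [av1, bv1] at this; simpa using this
private lemma bv2 : bv 2 = 2 := by
  have := bv_even 1 one_ne_zero; rw [av1] at this; simpa using this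
private lemma av4 : av 4 = 5 := by
  have := av_even 2 two_ne_zero; rw [av2, bv2] at this; simpa using this
private lemma bv4 : bv 4 = 3 := by
  have := bv_even 2 two_ne_zero; rw [av2] at this; simpa using this

/- ### N function -/

private def NN (n : ℕ) : ℝ := ((n:ℝ)+1) ^ al

private lemma NN_nonneg (n : ℕ) : 0 ≤ NN n := Real.rpow_nonneg (by positivity) _

private lemma NN_ge (n : ℕ) : (n:ℝ)+1 ≤ NN n := by
  have h1 : ((n:ℝ)+1) ^ (1:ℝ) ≤ ((n:ℝ)+1) ^ al :=
    Real.rpow_le_rpow_of_exponent_le (by push_cast; linarith [Nat.cast_nonneg (α := ℝ) n]) al_ge1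
  rwa [Real.rpow_one] at h1

private lemma NN_zero : NN 0 = 1 := by simp [NN]

private lemma NN_odd (k : ℕ) : NN (2*k+1) = (1+ss) * NN k := by
  unfold NN
  have h : ((2*k+1 : ℕ):ℝ) + 1 = 2 * ((k:ℝ)+1) := by push_cast; ring
  rw [h, Real.mul_rpow (by norm_num) (by positivity), two_rpow_al]

private lemma NN_four_le {k : ℕ} (hk : 3 ≤ k) : (1+ss)^2 ≤ NN k := by
  have h4 : ((4:ℝ)) ^ al ≤ ((k:ℝ)+1) ^ al := by
    apply Real.rpow_le_rpow (by norm_num) _ (le_of_lt al_pos)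
    have : (3:ℝ) ≤ (k:ℝ) := by exact_mod_cast hk
    linarith
  have h42 : ((4:ℝ)) ^ al = (1+ss)^2 := by
    rw [show (4:ℝ) = 2*2 by norm_num, Real.mul_rpow (by norm_num) (by norm_num), two_rpow_al]
    ring
  rw [← h42]; exact h4

private lemma NN_even_ge {k : ℕ} (hk : 2 ≤ k) : 47/25 * NN k ≤ NN (2*k) := by
  unfold NN
  have h1 : (47/25 : ℝ) ≤ (5/3 : ℝ) ^ al := by
    apply le_rpow_al (by norm_num) (by norm_num)
    norm_num
  have h2 : ((5:ℝ)/3) ^ al * ((k:ℝ)+1) ^ al = ((5/3) * ((k:ℝ)+1)) ^ al :=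
    (Real.mul_rpow (by norm_num) (by positivity)).symm
  have h3 : ((5/3 : ℝ) * ((k:ℝ)+1)) ^ al ≤ (((2*k : ℕ):ℝ)+1) ^ al := by
    apply Real.rpow_le_rpow (by positivity) _ (le_of_lt al_pos)
    have : (2:ℝ) ≤ (k:ℝ) := by exact_mod_cast hk
    push_cast
    linarith
  calc 47/25 * ((k:ℝ)+1) ^ al ≤ (5/3 : ℝ)^al * ((k:ℝ)+1) ^ al := by
        apply mul_le_mul_of_nonneg_right h1 (Real.rpow_nonneg (by positivity) _)
    _ = ((5/3 : ℝ) * ((k:ℝ)+1)) ^ al := h2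
    _ ≤ (((2*k : ℕ):ℝ)+1) ^ al := h3

end
noncomputable section
open Filter

private lemma step_odd {s a b N : ℝ} (hs2 : s^2 = 2) (hs1 : 1.4142 ≤ s) (hsu : s ≤ 1.41422)
    (hb0 : 0 ≤ b) (hba : b ≤ a)
    (h1 : a + (s-1)*b ≤ N) (h2 : a ≤ (2+s)/4*N + (2+s)/4) (h3 : a + b ≤ (1+s)/2*(N+1)) :
    (2*a+b) + (s-1)*a ≤ (1+s)*N ∧
    2*a+b ≤ (2+s)/4*((1+s)*N) + (2+s)/4 ∧
    (2*a+b) + a ≤ (1+s)/2*((1+s)*N+1) := by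
  refine ⟨?_, ?_, ?_⟩
  · nlinarith [mul_le_mul_of_nonneg_left h1 (show (0:ℝ) ≤ 1+s by linarith)]
  · nlinarith [mul_le_mul_of_nonneg_left h1 (show (0:ℝ) ≤ (2+s)/2 by linarith),
      mul_le_mul_of_nonneg_left h3 (show (0:ℝ) ≤ (2-s)/2 by linarith)]
  · nlinarith [mul_le_mul_of_nonneg_left h1 (show (0:ℝ) ≤ 1+s by linarith),
      mul_le_mul_of_nonneg_left h2 (show (0:ℝ) ≤ 2-s by linarith)]

private lemma step_even {s a b N P : ℝ} (hs2 : s^2 = 2) (hs1 : 1.4142 ≤ s) (hsu : s ≤ 1.41422)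
    (hb0 : 0 ≤ b) (hba : b ≤ a) (hN : 3 + 2*s ≤ N) (hP : 47/25*N ≤ P)
    (h1 : a + (s-1)*b ≤ N) (h2 : a ≤ (2+s)/4*N + (2+s)/4) (h3 : a + b ≤ (1+s)/2*(N+1)) :
    (a+b) + (s-1)*a ≤ P ∧
    a+b ≤ (2+s)/4*P + (2+s)/4 ∧
    (a+b) + a ≤ (1+s)/2*(P+1) := by
  refine ⟨?_, ?_, ?_⟩
  · nlinarith [mul_le_mul_of_nonneg_left h1 (show (0:ℝ) ≤ s/2 by linarith),
      mul_le_mul_of_nonneg_left h3 (show (0:ℝ) ≤ s/2 by linarith),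
      mul_le_mul_of_nonneg_right hsu (show (0:ℝ) ≤ N by linarith)]
  · nlinarith [h3, mul_le_mul_of_nonneg_right hsu (show (0:ℝ) ≤ N by linarith),
      mul_le_mul_of_nonneg_right hs1 (show (0:ℝ) ≤ N by linarith)]
  · nlinarith [mul_le_mul_of_nonneg_left h1 (show (0:ℝ) ≤ (2+s)/2 by linarith),
      mul_le_mul_of_nonneg_left h3 (show (0:ℝ) ≤ (2-s)/2 by linarith),
      mul_le_mul_of_nonneg_right hsu (show (0:ℝ) ≤ N by linarith)]

/-- the three invariants -/
private theorem invar : ∀ n : ℕ,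
    (av n : ℝ) + (ss-1)*(bv n) ≤ NN n ∧
    (av n : ℝ) ≤ (2+ss)/4 * NN n + (2+ss)/4 ∧
    (av n : ℝ) + (bv n) ≤ (1+ss)/2 * (NN n + 1) := by
  have hs2 := ss_sq
  have hs1 := ss_lb
  have hsu := ss_ub
  intro n
  induction n using Nat.strong_induction_on with
  | _ n ih =>
    rcases Nat.even_or_odd n with ⟨k, hk⟩ | ⟨k, hk⟩
    · -- n = 2k
      rcases Nat.lt_or_ge n 6 with h6 | h6
      · -- base even cases : n = 0, 2, 4
        have : n = 0 ∨ n = 2 ∨ n = 4 := by omega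
        rcases this with h | h | h <;> subst h
        · rw [av_zero, bv_zero, NN_zero]
          refine ⟨by norm_num, by push_cast; nlinarith, by push_cast; nlinarith⟩
        · have hA : 1 + 2*ss ≤ NN 2 := by
            apply le_rpow_al (x := (2:ℝ)+1) (by norm_num) (by nlinarith) (by nlinarith)
          have hB : (3.2:ℝ) ≤ NN 2 := by
            apply le_rpow_al (x := (2:ℝ)+1) (by norm_num) (by norm_num) (by norm_num)
          rw [av2, bv2]
          push_cast
          refine ⟨by nlinarith, by nlinarith, by nlinarith⟩
        · have hA : 2 + 3*ss ≤ NN 4 := by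
            apply le_rpow_al (x := (4:ℝ)+1) (by norm_num) (by nlinarith) (by nlinarith)
          have hB : (5.7:ℝ) ≤ NN 4 := by
            apply le_rpow_al (x := (4:ℝ)+1) (by norm_num) (by norm_num) (by norm_num)
          rw [av4, bv4]
          push_cast
          refine ⟨by nlinarith, by nlinarith, by nlinarith⟩
      · -- even step, k ≥ 3
        have hk3 : 3 ≤ k := by omega
        have hk0 : k ≠ 0 := by omega
        have hkn : k < n := by omega
        obtain ⟨h1, h2, h3⟩ := ih k hkn
        obtain ⟨ha1, hb0, hba⟩ := av_basic k
        have hN4 : 3 + 2*ss ≤ NN k := by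
          have := NN_four_le hk3; nlinarith
        have hn2k : n = 2*k := by omega
        subst hn2k
        have hP := NN_even_ge (show 2 ≤ k by omega)
        rw [av_even k hk0, bv_even k hk0]
        push_cast
        have hb0' : (0:ℝ) ≤ (bv k : ℝ) := by exact_mod_cast hb0
        have hba' : (bv k : ℝ) ≤ (av k : ℝ) := by exact_mod_cast hba
        exact step_even hs2 hs1 hsu hb0' hba' hN4 hP h1 h2 h3
    · -- n = 2k+1
      have hkn : k < n := by omega
      have hn2k : n = 2*k+1 := by omega
      obtain ⟨h1, h2, h3⟩ := ih k hkn
      obtain ⟨ha1, hb0, hba⟩ := av_basic k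
      subst hn2k
      rw [av_odd k, bv_odd k, NN_odd k]
      push_cast
      have hb0' : (0:ℝ) ≤ (bv k : ℝ) := by exact_mod_cast hb0
      have hba' : (bv k : ℝ) ≤ (av k : ℝ) := by exact_mod_cast hba
      exact step_odd hs2 hs1 hsu hb0' hba' h1 h2 h3

end
noncomputable section
open Filter

private lemma NN_pow (m : ℕ) : NN (2^m - 1) = (1+ss)^m := by
  unfold NN
  have h1 : ((2^m - 1 : ℕ):ℝ) + 1 = (2:ℝ)^m := by
    have := Nat.one_le_two_pow (n := m)
    push_cast [Nat.cast_sub this]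
    ring
  rw [h1, ← Real.rpow_natCast 2 m, ← Real.rpow_mul (by norm_num), mul_comm,
    Real.rpow_mul (by norm_num), Real.rpow_natCast, two_rpow_al]

private lemma ones_eq (m : ℕ) : (av (2^m - 1) : ℝ) + (ss-1) * (bv (2^m - 1)) = (1+ss)^m := by
  induction m with
  | zero => simp [av_zero, bv_zero]
  | succ m ih =>
    have h : 2^(m+1) - 1 = 2*(2^m - 1) + 1 := by
      have := Nat.one_le_two_pow (n := m); omega
    rw [h, av_odd, bv_odd]
    push_cast
    linear_combination (1+ss) * ih - (bv (2^m-1):ℝ) * ss_sq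

private lemma ones_lb (m : ℕ) (hm : 1 ≤ m) :
    (2+ss)/4 * (1+ss)^m - 1 ≤ (av (2^m - 1) : ℝ) := by
  obtain ⟨j, rfl⟩ : ∃ j, m = j + 1 := ⟨m - 1, by omega⟩
  have h : 2^(j+1) - 1 = 2*(2^j - 1) + 1 := by
    have := Nat.one_le_two_pow (n := j); omega
  have hb : bv (2^(j+1) - 1) = av (2^j - 1) := by rw [h, bv_odd]
  have heq := ones_eq (j+1)
  have hup := (invar (2^j - 1)).2.1
  rw [NN_pow j] at hup
  rw [hb] at heq
  have hs2 := ss_sq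
  have hs1 := ss_lb
  have hsu := ss_ub
  have hpow : (0:ℝ) ≤ (1+ss)^j := by
    apply pow_nonneg; linarith
  have hX : (ss^2 - 2)*(1+ss)^j = 0 := by rw [hs2]; ring
  have hr : (1+ss)^(j+1) = (1+ss)^j * (1+ss) := pow_succ _ _
  rw [hr] at heq ⊢
  nlinarith [mul_le_mul_of_nonneg_left hup (show (0:ℝ) ≤ ss - 1 by linarith), hX]

private lemma r_pow_ge (m : ℕ) : (1:ℝ) + m ≤ (1+ss)^m := by
  have h := one_add_mul_le_pow (a := ss) (by nlinarith [ss_lb]) m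
  have hs1 := ss_lb
  have hm : (0:ℝ) ≤ (m:ℕ) := Nat.cast_nonneg m
  nlinarith [h, mul_le_mul_of_nonneg_left hs1 hm]

private lemma npow_le (m : ℕ) : ((2^m - 1 : ℕ):ℝ) ^ al ≤ (1+ss)^m := by
  have h1 : ((2^m - 1 : ℕ):ℝ) ≤ (2:ℝ)^m := by
    have := Nat.one_le_two_pow (n := m)
    push_cast [Nat.cast_sub this]
    norm_num
  have h2 : ((2^m - 1 : ℕ):ℝ) ^ al ≤ ((2:ℝ)^m) ^ al :=
    Real.rpow_le_rpow (by positivity) h1 (le_of_lt al_pos)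
  calc ((2^m - 1 : ℕ):ℝ) ^ al ≤ ((2:ℝ)^m) ^ al := h2
    _ = (1+ss)^m := by
      rw [← Real.rpow_natCast 2 m, ← Real.rpow_mul (by norm_num), mul_comm,
        Real.rpow_mul (by norm_num), Real.rpow_natCast, two_rpow_al]

private def FF : ℕ → ℝ := fun n => (av n : ℝ) / (n:ℝ) ^ al
private def GG : ℕ → ℝ := fun n => (2+ss)/4 * (1+1/(n:ℝ)) ^ al + ((2+ss)/4) / (n:ℝ)^al

private lemma FF_le_GG : ∀ᶠ n in atTop, FF n ≤ GG n := by
  filter_upwards [eventually_ge_atTop 1] with n hn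
  have hn1 : (1:ℝ) ≤ (n:ℝ) := by exact_mod_cast hn
  have hn0 : (0:ℝ) < (n:ℝ) := by linarith
  have hpow : (0:ℝ) < (n:ℝ)^al := Real.rpow_pos_of_pos hn0 _
  have hub := (invar n).2.1
  have hsplit : ((n:ℝ)+1) ^ al = (1+1/(n:ℝ)) ^ al * (n:ℝ)^al := by
    rw [← Real.mul_rpow (by positivity) (by positivity)]
    congr 1
    field_simp
  unfold FF GG
  rw [div_le_iff₀ hpow]
  have h2 : (2+ss)/4 * (1+1/(n:ℝ)) ^ al * (n:ℝ)^al + ((2+ss)/4) / (n:ℝ)^al * (n:ℝ)^al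
      = (2+ss)/4 * ((n:ℝ)+1)^al + (2+ss)/4 := by
    rw [hsplit, div_mul_cancel₀]
    · ring
    · exact ne_of_gt hpow
  calc (av n : ℝ) ≤ (2+ss)/4 * NN n + (2+ss)/4 := hub
    _ = (2+ss)/4 * (1+1/(n:ℝ)) ^ al * (n:ℝ)^al + ((2+ss)/4) / (n:ℝ)^al * (n:ℝ)^al := by
        rw [h2]; rfl
    _ = ((2+ss)/4 * (1+1/(n:ℝ)) ^ al + ((2+ss)/4) / (n:ℝ)^al) * (n:ℝ)^al := by ring

private lemma GG_tendsto : Tendsto GG atTop (nhds ((2+ss)/4)) := by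
  have t1 : Tendsto (fun n:ℕ => 1+1/(n:ℝ)) atTop (nhds 1) := by
    have := tendsto_const_nhds (x := (1:ℝ)) (f := atTop (α := ℕ))
    have h := this.add tendsto_one_div_atTop_nhds_zero_nat
    simpa using h
  have t2 : Tendsto (fun n:ℕ => (1+1/(n:ℝ)) ^ al) atTop (nhds 1) := by
    have hc : ContinuousAt (fun x:ℝ => x ^ al) 1 :=
      Real.continuousAt_rpow_const 1 al (Or.inl one_ne_zero)
    have := hc.tendsto.comp t1
    simpa [Real.one_rpow, Function.comp_def] using this
  have t3 : Tendsto (fun n:ℕ => ((2+ss)/4) / (n:ℝ)^al) atTop (nhds 0) := by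
    apply Tendsto.div_atTop tendsto_const_nhds
    exact (tendsto_rpow_atTop al_pos).comp tendsto_natCast_atTop_atTop
  have h := (tendsto_const_nhds (x := (2+ss)/4) (f := atTop (α := ℕ))).mul t2 |>.add t3
  unfold GG
  simpa [one_div] using h

private lemma FF_nonneg (n : ℕ) : 0 ≤ FF n := by
  apply div_nonneg _ (Real.rpow_nonneg (Nat.cast_nonneg n) _)
  exact_mod_cast (by linarith [(av_basic n).1] : (0:ℤ) ≤ av n)

private lemma limsup_FF_le : limsup FF atTop ≤ (2+ss)/4 := by
  have h := limsup_le_limsup FF_le_GG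
    (isCoboundedUnder_le_of_le atTop (f := FF) (x := 0) FF_nonneg)
    GG_tendsto.isBoundedUnder_le
  rwa [GG_tendsto.limsup_eq] at h

private lemma limsup_FF_ge : (2+ss)/4 ≤ limsup FF atTop := by
  have hBdd : IsBoundedUnder (· ≤ ·) atTop FF :=
    GG_tendsto.isBoundedUnder_le.mono_le FF_le_GG
  have key : ∀ ε : ℝ, 0 < ε → (2+ss)/4 - ε ≤ limsup FF atTop := by
    intro ε hε
    apply le_limsup_of_frequently_le _ hBdd
    rw [frequently_atTop]
    intro N0
    obtain ⟨M, hM⟩ := exists_nat_ge (1/ε)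
    set m := max (max N0 M) 1 with hm
    have hm1 : 1 ≤ m := le_max_right _ 1
    have hmN0 : N0 ≤ m := le_trans (le_max_left _ _) (le_max_left _ _)
    have hmM : M ≤ m := le_trans (le_max_right _ _) (le_max_left _ _)
    refine ⟨2^m - 1, ?_, ?_⟩
    · have : m < 2^m := Nat.lt_two_pow_self
      omega
    · -- (2+ss)/4 - ε ≤ FF (2^m - 1)
      have hss0 : (0:ℝ) < 1+ss := by linarith [ss_lb]
      have hrm : (0:ℝ) < (1+ss)^m := pow_pos hss0 m
      have hn1 : 1 ≤ 2^m - 1 := by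
        have : 2^1 ≤ 2^m := Nat.pow_le_pow_right (by norm_num) hm1
        omega
      have hnR : (1:ℝ) ≤ ((2^m - 1:ℕ):ℝ) := by exact_mod_cast hn1
      have hpow0 : (0:ℝ) < ((2^m - 1:ℕ):ℝ) ^ al := Real.rpow_pos_of_pos (by linarith) _
      have hav := ones_lb m hm1
      have havnn : (0:ℝ) ≤ (av (2^m-1) : ℝ) := by
        exact_mod_cast (by linarith [(av_basic (2^m-1)).1] : (0:ℤ) ≤ av (2^m-1))
      have step1 : (av (2^m-1) : ℝ) / (1+ss)^m ≤ FF (2^m - 1) := by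
        unfold FF
        exact div_le_div_of_nonneg_left havnn hpow0 (npow_le m)
      have step2 : (2+ss)/4 - 1/(1+ss)^m ≤ (av (2^m-1) : ℝ) / (1+ss)^m := by
        have e : (2+ss)/4 - 1/(1+ss)^m = ((2+ss)/4 * (1+ss)^m - 1)/(1+ss)^m := by
          field_simp
        rw [e]
        gcongr
      have step3 : (1:ℝ)/(1+ss)^m ≤ ε := by
        have h1 : (1:ℝ) + m ≤ (1+ss)^m := r_pow_ge m
        have hMm : (M:ℝ) ≤ (m:ℝ) := by exact_mod_cast hmM
        have h2 : 1/ε ≤ (1:ℝ) + m := by linarith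
        rw [div_le_iff₀ hrm]
        rw [div_le_iff₀ hε] at hM
        nlinarith
      calc (2+ss)/4 - ε ≤ (2+ss)/4 - 1/(1+ss)^m := by linarith
        _ ≤ (av (2^m-1) : ℝ) / (1+ss)^m := step2
        _ ≤ FF (2^m - 1) := step1
  by_contra hcon
  push_neg at hcon
  have hε : 0 < ((2+ss)/4 - limsup FF atTop)/2 := by linarith
  have := key _ hε
  linarith

end

open Filter in
/-- `limsup_{n→∞} κ₂(n)/n^{log₂(1+√2)} = (2+√2)/4`. -/
theorem stmt10 :
    limsup (fun n : ℕ => (kap 2 n : ℝ) / (n : ℝ) ^ Real.logb 2 (1 + Real.sqrt 2)) atTop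
      = (2 + Real.sqrt 2) / 4 := by
  have h : (fun n : ℕ => (kap 2 n : ℝ) / (n : ℝ) ^ Real.logb 2 (1 + Real.sqrt 2)) = FF := by
    funext n
    rfl
  rw [h]
  exact le_antisymm limsup_FF_le limsup_FF_ge
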